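/- Every bipartite (142,2)-HEDCS H with vertex parts P and Q having at least 141·|P|/2 edges satisfies |Q| ≥ 0.789·|P|. -/

import Mathlib

open Finset

variable {V : Type*} [DecidableEq V]

/-- Degree of a vertex in an edge set. -/
def deg (E : Finset (Sym2 V)) (v : V) : ℕ := (E.filter (fun e => v ∈ e)).card

/-- Edge-degree: the sum of the degrees of the two endpoints. -/
def edeg (E : Finset (Sym2 V)) (e : Sym2 V) : ℕ :=
  Sym2.lift ⟨fun u v => deg E u + deg E v, fun _ _ => add_comm _ _⟩ e

/-- Generalized `(β,β⁻,k)`-HEDCS of `G`: a hierarchical decomposition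
`∅ = H_0 ⊆ H_1 ⊆ … ⊆ H_k = Hs` with edge-degrees in `H_i` of new edges at most `β`,
and every edge of `G` outside `Hs` has edge-degree at least `β⁻` in `Hs`. -/
def IsHEDCSgen (G Hs : Finset (Sym2 V)) (β βm k : ℕ) : Prop :=
  Hs ⊆ G ∧ ∃ H : ℕ → Finset (Sym2 V),
    H 0 = ∅ ∧ H k = Hs ∧
    (∀ i < k, H i ⊆ H (i + 1)) ∧
    (∀ i, 1 ≤ i → i ≤ k → ∀ e ∈ H i \ H (i - 1), edeg (H i) e ≤ β) ∧
    (∀ e ∈ G \ Hs, βm ≤ edeg Hs e)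

/-- `(β,k)`-HEDCS of `G`. -/
def IsHEDCS (G Hs : Finset (Sym2 V)) (β k : ℕ) : Prop :=
  IsHEDCSgen G Hs β (β - 1) k

/-- Bipartite `(β,k)`-HEDCS with vertex parts `P` and `Q`
(the base graph is `Hs` itself, so the second HEDCS condition is vacuous). -/
def IsBipartiteHEDCS (P Q : Finset V) (Hs : Finset (Sym2 V)) (β k : ℕ) : Prop :=
  Disjoint P Q ∧
  (∀ e ∈ Hs, ∃ u v, e = s(u, v) ∧ u ∈ P ∧ v ∈ Q) ∧
  ∃ H : ℕ → Finset (Sym2 V),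
    H 0 = ∅ ∧ H k = Hs ∧
    (∀ i < k, H i ⊆ H (i + 1)) ∧
    (∀ i, 1 ≤ i → i ≤ k → ∀ e ∈ H i \ H (i - 1), edeg (H i) e ≤ β)

/-- A matching: a set of pairwise vertex-disjoint (non-loop) edges. -/
def IsMatching (M : Finset (Sym2 V)) : Prop :=
  (∀ e ∈ M, ¬ e.IsDiag) ∧
  ∀ e ∈ M, ∀ f ∈ M, e ≠ f → ∀ v : V, v ∈ e → v ∉ f

/-- The maximum matching size of the edge set `E`. -/
noncomputable def matchNum (E : Finset (Sym2 V)) : ℕ :=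
  sSup {n : ℕ | ∃ M : Finset (Sym2 V), M ⊆ E ∧ IsMatching M ∧ M.card = n}

lemma sum_side (S : Finset V) (E' : Finset (Sym2 V))
    (h1 : ∀ e ∈ E', (S.filter (fun v => v ∈ e)).card = 1) (F : Sym2 V → ℤ) :
    ∑ e ∈ E', F e = ∑ v ∈ S, ∑ e ∈ E'.filter (fun e => v ∈ e), F e := by
  have step : ∀ v ∈ S, ∑ e ∈ E'.filter (fun e => v ∈ e), F e
      = ∑ e ∈ E', if v ∈ e then F e else 0 := by
    intro v _
    exact Finset.sum_filter _ _
  rw [Finset.sum_congr rfl step, Finset.sum_comm]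
  refine Finset.sum_congr rfl fun e he => ?_
  rw [← Finset.sum_filter, Finset.sum_const, h1 e he, one_smul]


/-- Every bipartite (142,2)-HEDCS `H` with vertex parts `P` and `Q`
having at least 141·|P|/2 edges satisfies |Q| ≥ 0.789·|P|. -/
theorem bipartite_hedcs_k2_beta142 {V : Type*} [DecidableEq V]
    (P Q : Finset V) (Hs : Finset (Sym2 V))
    (hH : IsBipartiteHEDCS P Q Hs 142 2)
    (hcard : (141 : ℝ) * P.card / 2 ≤ (Hs.card : ℝ)) :
    (0.789 : ℝ) * P.card ≤ (Q.card : ℝ) := by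
  obtain ⟨hdisj, hbip, H, hH0, hH2, hsub, hbnd⟩ := hH
  set A : Finset (Sym2 V) := H 1 with hA
  have hAsub : A ⊆ Hs := hH2 ▸ hsub 1 (by norm_num)
  have hAcond : ∀ e ∈ A, edeg A e ≤ 142 := by
    intro e he
    have := hbnd 1 le_rfl (by norm_num) e (by simp [hH0]; exact he)
    simpa using this
  have hBcond : ∀ e ∈ Hs \ A, edeg Hs e ≤ 142 := by
    intro e he
    have := hbnd 2 (by norm_num) le_rfl e (by simpa [hH2] using he)
    simpa [hH2] using this
  -- each edge has exactly one endpoint in Q and one in P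
  have hQ1 : ∀ e ∈ Hs, (Q.filter (fun v => v ∈ e)).card = 1 := by
    intro e he
    obtain ⟨u, v, rfl, hu, hv⟩ := hbip e he
    have : Q.filter (fun x => x ∈ s(u,v)) = {v} := by
      ext x
      simp only [Finset.mem_filter, Sym2.mem_iff, Finset.mem_singleton]
      constructor
      · rintro ⟨hx, rfl | rfl⟩
        · exact absurd hx (Finset.disjoint_left.mp hdisj hu)
        · rfl
      · rintro rfl; exact ⟨hv, Or.inr rfl⟩
    rw [this, Finset.card_singleton]
  have hP1 : ∀ e ∈ Hs, (P.filter (fun v => v ∈ e)).card = 1 := by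
    intro e he
    obtain ⟨u, v, rfl, hu, hv⟩ := hbip e he
    have : P.filter (fun x => x ∈ s(u,v)) = {u} := by
      ext x
      simp only [Finset.mem_filter, Sym2.mem_iff, Finset.mem_singleton]
      constructor
      · rintro ⟨hx, rfl | rfl⟩
        · rfl
        · exact absurd hx (Finset.disjoint_right.mp hdisj hv)
      · rintro rfl; exact ⟨hu, Or.inl rfl⟩
    rw [this, Finset.card_singleton]
  -- weight function
  set W : Sym2 V → ℤ := fun e =>
    if e ∈ A then ∑ q ∈ Q.filter (fun v => v ∈ e), (238 - (deg A q : ℤ))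
    else ∑ q ∈ Q.filter (fun v => v ∈ e), (4 * (119 - (deg Hs q : ℤ))) with hW
  have hd12 : ∀ v : V, deg A v ≤ deg Hs v := fun v =>
    Finset.card_le_card (Finset.filter_subset_filter _ hAsub)
  -- Upper bound: sum over Q
  have hupper : ∑ e ∈ Hs, W e ≤ 14161 * (Q.card : ℤ) := by
    rw [sum_side Q Hs hQ1 W]
    have hq : ∀ q ∈ Q, ∑ e ∈ Hs.filter (fun e => q ∈ e), W e ≤ 14161 := by
      intro q hq
      set Eq := Hs.filter (fun e => q ∈ e) with hEq
      have hsplit := (Finset.sum_filter_add_sum_filter_not Eq (fun e => e ∈ A) W).symm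
      have hAq : Eq.filter (fun e => e ∈ A) = A.filter (fun e => q ∈ e) := by
        ext e
        simp only [hEq, Finset.mem_filter]
        exact ⟨fun ⟨⟨_, h2⟩, h3⟩ => ⟨h3, h2⟩, fun ⟨h1, h2⟩ => ⟨⟨hAsub h1, h2⟩, h1⟩⟩
      have hWA : ∀ e ∈ Eq.filter (fun e => e ∈ A), W e = 238 - (deg A q : ℤ) := by
        intro e he
        rw [Finset.mem_filter] at he
        obtain ⟨heE, heA⟩ := he
        rw [hEq, Finset.mem_filter] at heE
        have hsing : Q.filter (fun v => v ∈ e) = {q} := by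
          refine Finset.eq_singleton_iff_unique_mem.mpr ⟨Finset.mem_filter.mpr ⟨hq, heE.2⟩, ?_⟩
          intro x hx
          exact Finset.card_le_one.mp (le_of_eq (hQ1 e heE.1)) x hx q (Finset.mem_filter.mpr ⟨hq, heE.2⟩)
        simp only [hW]
        rw [if_pos heA, hsing, Finset.sum_singleton]
      have hWB : ∀ e ∈ Eq.filter (fun e => e ∉ A), W e = 4 * (119 - (deg Hs q : ℤ)) := by
        intro e he
        rw [Finset.mem_filter] at he
        obtain ⟨heE, heA⟩ := he
        rw [hEq, Finset.mem_filter] at heE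
        have hsing : Q.filter (fun v => v ∈ e) = {q} := by
          refine Finset.eq_singleton_iff_unique_mem.mpr ⟨Finset.mem_filter.mpr ⟨hq, heE.2⟩, ?_⟩
          intro x hx
          exact Finset.card_le_one.mp (le_of_eq (hQ1 e heE.1)) x hx q (Finset.mem_filter.mpr ⟨hq, heE.2⟩)
        simp only [hW]
        rw [if_neg heA, hsing, Finset.sum_singleton]
      have hcardA : (Eq.filter (fun e => e ∈ A)).card = deg A q := by
        rw [hAq]; rfl
      have hcardEq : Eq.card = deg Hs q := rfl
      have hcardsum : (Eq.filter (fun e => e ∈ A)).card + (Eq.filter (fun e => e ∉ A)).card = Eq.card :=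
        Finset.card_filter_add_card_filter_not _
      have hcardB : ((Eq.filter (fun e => e ∉ A)).card : ℤ) = (deg Hs q : ℤ) - (deg A q : ℤ) := by
        have := hcardsum
        rw [hcardA, hcardEq] at this
        omega
      rw [hsplit, Finset.sum_congr rfl hWA, Finset.sum_congr rfl hWB,
        Finset.sum_const, Finset.sum_const, hcardA]
      have h12 := hd12 q
      rw [nsmul_eq_mul, nsmul_eq_mul, hcardB]
      nlinarith [sq_nonneg (2 * (deg Hs q : ℤ) - (deg A q : ℤ) - 119), Int.natCast_nonneg (deg A q)]
    calc ∑ q ∈ Q, ∑ e ∈ Hs.filter (fun e => q ∈ e), W e ≤ ∑ _q ∈ Q, (14161 : ℤ) :=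
          Finset.sum_le_sum hq
      _ = 14161 * (Q.card : ℤ) := by rw [Finset.sum_const, nsmul_eq_mul]; ring
  -- Lower bound: sum over P
  have hlower : 284 * (Hs.card : ℤ) - 8836 * (P.card : ℤ) ≤ ∑ e ∈ Hs, W e := by
    rw [sum_side P Hs hP1 W]
    have hp : ∀ p ∈ P, 284 * (deg Hs p : ℤ) - 8836 ≤ ∑ e ∈ Hs.filter (fun e => p ∈ e), W e := by
      intro p hp
      set Ep := Hs.filter (fun e => p ∈ e) with hEp
      have hsplit := (Finset.sum_filter_add_sum_filter_not Ep (fun e => e ∈ A) W).symm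
      -- per A-edge at p
      have hWA : ∀ e ∈ Ep.filter (fun e => e ∈ A), (96 + (deg A p : ℤ)) ≤ W e := by
        intro e he
        rw [Finset.mem_filter] at he
        obtain ⟨heE, heA⟩ := he
        rw [hEp, Finset.mem_filter] at heE
        obtain ⟨heH, hpe⟩ := heE
        obtain ⟨u, v, rfl, hu, hv⟩ := hbip e heH
        have hpu : p = u := by
          rcases Sym2.mem_iff.mp hpe with h | h
          · exact h
          · exact absurd (h ▸ hp) (Finset.disjoint_right.mp hdisj hv)
        have hsing : Q.filter (fun x => x ∈ s(u,v)) = {v} := by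
          refine Finset.eq_singleton_iff_unique_mem.mpr
            ⟨Finset.mem_filter.mpr ⟨hv, by simp⟩, ?_⟩
          intro x hx
          exact Finset.card_le_one.mp (le_of_eq (hQ1 _ heH)) x hx v
            (Finset.mem_filter.mpr ⟨hv, by simp⟩)
        have hedeg : deg A u + deg A v ≤ 142 := by
          have := hAcond _ heA
          simpa [edeg] using this
        have hWe : W s(u,v) = 238 - (deg A v : ℤ) := by
          simp only [hW]
          rw [if_pos heA, hsing, Finset.sum_singleton]
        rw [hWe, hpu]
        have : (deg A u : ℤ) + (deg A v : ℤ) ≤ 142 := by exact_mod_cast hedeg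
        linarith
      have hWB : ∀ e ∈ Ep.filter (fun e => e ∉ A), 4 * ((deg Hs p : ℤ) - 23) ≤ W e := by
        intro e he
        rw [Finset.mem_filter] at he
        obtain ⟨heE, heA⟩ := he
        rw [hEp, Finset.mem_filter] at heE
        obtain ⟨heH, hpe⟩ := heE
        obtain ⟨u, v, rfl, hu, hv⟩ := hbip e heH
        have hpu : p = u := by
          rcases Sym2.mem_iff.mp hpe with h | h
          · exact h
          · exact absurd (h ▸ hp) (Finset.disjoint_right.mp hdisj hv)
        have hsing : Q.filter (fun x => x ∈ s(u,v)) = {v} := by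
          refine Finset.eq_singleton_iff_unique_mem.mpr
            ⟨Finset.mem_filter.mpr ⟨hv, by simp⟩, ?_⟩
          intro x hx
          exact Finset.card_le_one.mp (le_of_eq (hQ1 _ heH)) x hx v
            (Finset.mem_filter.mpr ⟨hv, by simp⟩)
        have hedeg : deg Hs u + deg Hs v ≤ 142 := by
          have := hBcond _ (Finset.mem_sdiff.mpr ⟨heH, heA⟩)
          simpa [edeg] using this
        have hWe : W s(u,v) = 4 * (119 - (deg Hs v : ℤ)) := by
          simp only [hW]
          rw [if_neg heA, hsing, Finset.sum_singleton]
        rw [hWe, hpu]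
        have : (deg Hs u : ℤ) + (deg Hs v : ℤ) ≤ 142 := by exact_mod_cast hedeg
        linarith
      have hcardA : (Ep.filter (fun e => e ∈ A)).card = deg A p := by
        have : Ep.filter (fun e => e ∈ A) = A.filter (fun e => p ∈ e) := by
          ext e
          simp only [hEp, Finset.mem_filter]
          exact ⟨fun ⟨⟨_, h2⟩, h3⟩ => ⟨h3, h2⟩, fun ⟨h1, h2⟩ => ⟨⟨hAsub h1, h2⟩, h1⟩⟩
        rw [this]; rfl
      have hcardEp : Ep.card = deg Hs p := rfl
      have hcardsum : (Ep.filter (fun e => e ∈ A)).card + (Ep.filter (fun e => e ∉ A)).card = Ep.card :=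
        Finset.card_filter_add_card_filter_not _
      have hcardB : ((Ep.filter (fun e => e ∉ A)).card : ℤ) = (deg Hs p : ℤ) - (deg A p : ℤ) := by
        rw [hcardA, hcardEp] at hcardsum
        omega
      have hA_sum : ((Ep.filter (fun e => e ∈ A)).card : ℤ) * (96 + (deg A p : ℤ))
          ≤ ∑ e ∈ Ep.filter (fun e => e ∈ A), W e := by
        calc ((Ep.filter (fun e => e ∈ A)).card : ℤ) * (96 + (deg A p : ℤ))
            = ∑ _e ∈ Ep.filter (fun e => e ∈ A), (96 + (deg A p : ℤ)) := by
              rw [Finset.sum_const, nsmul_eq_mul]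
          _ ≤ _ := Finset.sum_le_sum hWA
      have hB_sum : ((Ep.filter (fun e => e ∉ A)).card : ℤ) * (4 * ((deg Hs p : ℤ) - 23))
          ≤ ∑ e ∈ Ep.filter (fun e => e ∉ A), W e := by
        calc ((Ep.filter (fun e => e ∉ A)).card : ℤ) * (4 * ((deg Hs p : ℤ) - 23))
            = ∑ _e ∈ Ep.filter (fun e => e ∉ A), (4 * ((deg Hs p : ℤ) - 23)) := by
              rw [Finset.sum_const, nsmul_eq_mul]
          _ ≤ _ := Finset.sum_le_sum hWB
      rw [hsplit]
      have h12 := hd12 p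
      have h12' : (deg A p : ℤ) ≤ (deg Hs p : ℤ) := by exact_mod_cast h12
      rw [hcardA] at hA_sum
      rw [hcardB] at hB_sum
      nlinarith [sq_nonneg ((deg A p : ℤ) - 2 * (deg Hs p : ℤ) + 94)]
    have hhs : (Hs.card : ℤ) = ∑ p ∈ P, (deg Hs p : ℤ) := by
      have h := sum_side P Hs hP1 (fun _ => (1 : ℤ))
      rw [Finset.sum_const, nsmul_eq_mul, mul_one] at h
      rw [h]
      refine Finset.sum_congr rfl fun p _ => ?_
      rw [Finset.sum_const, nsmul_eq_mul, mul_one]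
      rfl
    calc 284 * (Hs.card : ℤ) - 8836 * (P.card : ℤ)
        = ∑ p ∈ P, (284 * (deg Hs p : ℤ) - 8836) := by
          rw [Finset.sum_sub_distrib, ← Finset.mul_sum, ← hhs, Finset.sum_const,
            nsmul_eq_mul]
          ring
      _ ≤ ∑ p ∈ P, ∑ e ∈ Hs.filter (fun e => p ∈ e), W e := Finset.sum_le_sum hp
  -- combine
  have hkey : 284 * (Hs.card : ℤ) - 8836 * (P.card : ℤ) ≤ 14161 * (Q.card : ℤ) :=
    le_trans hlower hupper
  have hkeyR : 284 * (Hs.card : ℝ) - 8836 * (P.card : ℝ) ≤ 14161 * (Q.card : ℝ) := by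
    exact_mod_cast hkey
  have hP0 : (0 : ℝ) ≤ (P.card : ℝ) := Nat.cast_nonneg _
  nlinarith [hcard, hkeyR, hP0]
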